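/- Let {A_ℓ}_{ℓ∈ℕ} be a partition of ℕ into finite sets such that at least one A_ℓ contains two or more elements, Λ := ⋃_{ℓ∈ℕ} A_ℓ^ℕ ⊆ ℕ^ℕ, and Φ : Λ → ℕ^ℕ defined by (Φ(x))_j = max_{i≥j} x_i. Then Φ is not continuous (with respect to the subspace topology on Λ and the product topology on ℕ^ℕ). -/

import Mathlib

/-- Let `{A_ℓ}` be a partition of `ℕ` into finite sets, at least one of which has
two or more elements, `Λ := ⋃_ℓ A_ℓ^ℕ`, and `Φ : Λ → ℕ^ℕ` defined by
`(Φ x)_j = max_{i ≥ j} x_i`. Then `Φ` is not continuous (subspace topology on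
`Λ`, product topology on `ℕ^ℕ`). -/
theorem max_map_not_continuous
    (A : ℕ → Set ℕ)
    (hfin : ∀ ℓ, (A ℓ).Finite)
    (hdisj : Pairwise (fun ℓ ℓ' => Disjoint (A ℓ) (A ℓ')))
    (hcover : (⋃ ℓ, A ℓ) = Set.univ)
    (htwo : ∃ ℓ, ∃ a ∈ A ℓ, ∃ b ∈ A ℓ, a ≠ b) :
    ¬ Continuous
        (fun (x : {x : ℕ → ℕ | ∃ ℓ, ∀ i, x i ∈ A ℓ}) (j : ℕ) =>
          sSup {k | ∃ i, j ≤ i ∧ x.1 i = k}) := by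
  intro hcont
  obtain ⟨ℓ, a₀, ha₀, b₀, hb₀, hab₀⟩ := htwo
  -- normalize so that a < b
  set a := min a₀ b₀ with ha_def
  set b := max a₀ b₀ with hb_def
  have ha : a ∈ A ℓ := by rcases min_choice a₀ b₀ with h | h <;> rw [ha_def, h] <;> assumption
  have hb : b ∈ A ℓ := by rcases max_choice a₀ b₀ with h | h <;> rw [hb_def, h] <;> assumption
  have hab : a < b := by
    rcases lt_or_gt_of_ne hab₀ with h | h
    · simpa [ha_def, hb_def, min_eq_left h.le, max_eq_right h.le] using h
    · simpa [ha_def, hb_def, min_eq_right h.le, max_eq_left h.le] using h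
  -- the sequences and their limit
  set Λ := {x : ℕ → ℕ | ∃ ℓ, ∀ i, x i ∈ A ℓ} with hΛ
  have hmem : ∀ n : ℕ, (fun i => if i < n then a else b) ∈ Λ := by
    intro n
    exact ⟨ℓ, fun i => by by_cases h : i < n <;> simp [h, ha, hb]⟩
  have hpmem : (fun _ : ℕ => a) ∈ Λ := ⟨ℓ, fun _ => ha⟩
  set s : ℕ → Λ := fun n => ⟨fun i => if i < n then a else b, hmem n⟩ with hs
  set p : Λ := ⟨fun _ => a, hpmem⟩ with hp
  -- s n → p
  have htend : Filter.Tendsto s Filter.atTop (nhds p) := by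
    rw [tendsto_subtype_rng, tendsto_pi_nhds]
    intro i
    rw [nhds_discrete, Filter.tendsto_pure]
    filter_upwards [Filter.eventually_gt_atTop i] with n hn
    simp [hs, hp, hn]
  -- apply continuity and evaluate at 0
  have h0 : Filter.Tendsto
      (fun n => sSup {k | ∃ i, 0 ≤ i ∧ (s n).1 i = k}) Filter.atTop
      (nhds (sSup {k | ∃ i, 0 ≤ i ∧ p.1 i = k})) :=
    (((continuous_apply 0).comp hcont).tendsto p).comp htend
  have hval : ∀ n, sSup {k | ∃ i, 0 ≤ i ∧ (s n).1 i = k} = b := by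
    intro n
    apply IsGreatest.csSup_eq
    constructor
    · exact ⟨n, Nat.zero_le n, by simp [hs]⟩
    · rintro k ⟨i, -, hk⟩
      simp only [hs] at hk
      by_cases h : i < n
      · simp [h] at hk; omega
      · simp [h] at hk; omega
  have hpval : sSup {k | ∃ i, 0 ≤ i ∧ p.1 i = k} = a := by
    apply IsGreatest.csSup_eq
    constructor
    · exact ⟨0, le_refl 0, rfl⟩
    · rintro k ⟨i, -, hk⟩
      simp only [hp] at hk
      omega
  rw [hpval] at h0
  simp only [hval] at h0
  rw [nhds_discrete, Filter.tendsto_pure] at h0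
  obtain ⟨n, hn⟩ := h0.exists
  omega
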